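/- For any u, v ∈ ℝ³ with ‖u‖ < π and ‖v‖ < π, if exp(u^∧) = exp(v^∧) then u = v; that is, the exponential map of SO(3) is injective on the open ball of radius π in ℝ³. -/

import Mathlib

open Matrix

noncomputable section

/-- The `hat` map sending `u ∈ ℝ³` to the skew-symmetric matrix `u^∧` with `u^∧ v = u × v`. -/
def hat (u : EuclideanSpace ℝ (Fin 3)) : Matrix (Fin 3) (Fin 3) ℝ :=
  !![0, -u 2, u 1; u 2, 0, -u 0; -u 1, u 0, 0]

/-- `R ∈ SO(3)`: real 3×3 matrices with `RᵀR = I` and `det R = 1`. -/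
def SO3 (R : Matrix (Fin 3) (Fin 3) ℝ) : Prop := Rᵀ * R = 1 ∧ R.det = 1
lemma norm_sq_eq (u : EuclideanSpace ℝ (Fin 3)) : ‖u‖^2 = u 0^2 + u 1^2 + u 2^2 := by
  rw [EuclideanSpace.norm_eq, Real.sq_sqrt (by positivity)]
  simp [Fin.sum_univ_three, sq_abs]

lemma hat_cube (u : EuclideanSpace ℝ (Fin 3)) : hat u ^ 3 = (-‖u‖^2) • hat u := by
  have hn := norm_sq_eq u
  rw [pow_succ, pow_two]
  ext i j
  fin_cases i <;> fin_cases j <;>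
    simp [hat, Matrix.mul_apply, Fin.sum_univ_three, hn] <;> ring

lemma hat_pow_odd (u : EuclideanSpace ℝ (Fin 3)) (k : ℕ) :
    hat u ^ (2*k+1) = ((-‖u‖^2)^k) • hat u := by
  induction k with
  | zero => simp
  | succ k ih =>
    have : 2*(k+1)+1 = (2*k+1) + 2 := by ring
    rw [this, pow_add, ih, smul_mul_assoc,
      show hat u * hat u ^ 2 = hat u ^ 3 from (pow_succ' _ 2).symm,
      hat_cube, smul_smul, ← pow_succ]

lemma hat_pow_even (u : EuclideanSpace ℝ (Fin 3)) (k : ℕ) :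
    hat u ^ (2*k+2) = ((-‖u‖^2)^k) • (hat u ^ 2) := by
  have : 2*k+2 = (2*k+1) + 1 := by ring
  rw [this, pow_succ, hat_pow_odd, smul_mul_assoc, ← pow_two]

set_option maxHeartbeats 1000000 in
lemma rodrigues (u : EuclideanSpace ℝ (Fin 3)) (hθ : ‖u‖ ≠ 0) :
    NormedSpace.exp (hat u) = 1 + (Real.sin ‖u‖ / ‖u‖) • hat u
      + ((1 - Real.cos ‖u‖)/‖u‖^2) • (hat u)^2 := by
  letI : SeminormedRing (Matrix (Fin 3) (Fin 3) ℝ) := Matrix.linftyOpSemiNormedRing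
  letI : NormedRing (Matrix (Fin 3) (Fin 3) ℝ) := Matrix.linftyOpNormedRing
  letI : NormedAlgebra ℝ (Matrix (Fin 3) (Fin 3) ℝ) := Matrix.linftyOpNormedAlgebra
  set θ := ‖u‖ with hθdef
  have hs : HasSum (fun k : ℕ => ((-1)^k * θ^(2*k) / Nat.factorial (2*k+1) : ℝ)) (Real.sin θ / θ) := by
    have := (Real.hasSum_sin θ).div_const θ
    convert this using 2 with k
    · rfl
    rw [pow_succ]
    field_simp
  have hc : HasSum (fun k : ℕ => ((-1)^k * θ^(2*k) / Nat.factorial (2*k+2) : ℝ))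
      ((1 - Real.cos θ)/θ^2) := by
    have h1 := (hasSum_nat_add_iff' (f := fun n : ℕ => ((-1)^n * θ^(2*n) / Nat.factorial (2*n) : ℝ)) 1).mpr
      (Real.hasSum_cos θ)
    have h2 := (h1.neg.div_const (θ^2))
    convert h2 using 2 with k
    · rfl
    · have e : 2*(k+1) = 2*k+2 := by ring
      rw [e, pow_succ (-1 : ℝ) k, show θ^(2*k+2) = θ^(2*k)*θ^2 from by ring]
      field_simp
    · simp [Finset.sum_range_one]
  have h1 : HasSum (fun k : ℕ => ((Nat.factorial (2*k+1) : ℝ))⁻¹ • hat u ^ (2*k+1))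
      ((Real.sin θ / θ) • hat u) := by
    have := hs.smul_const (hat u)
    convert this using 2 with k
    rw [hat_pow_odd, smul_smul]
    congr 1
    rw [show ((-θ^2 : ℝ))^k = (-1)^k * θ^(2*k) from by rw [neg_pow, ← pow_mul]]
    field_simp
  have h2 : HasSum (fun k : ℕ => ((Nat.factorial (2*k+2) : ℝ))⁻¹ • hat u ^ (2*k+2))
      (((1 - Real.cos θ)/θ^2) • hat u ^ 2) := by
    have := hc.smul_const (hat u ^ 2)
    convert this using 2 with k
    rw [hat_pow_even, smul_smul]
    congr 1
    rw [show ((-θ^2 : ℝ))^k = (-1)^k * θ^(2*k) from by rw [neg_pow, ← pow_mul]]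
    field_simp
  have h3 : HasSum (fun n : ℕ => (((Nat.factorial (n+1)) : ℝ))⁻¹ • hat u ^ (n+1))
      ((Real.sin θ / θ) • hat u + ((1 - Real.cos θ)/θ^2) • hat u ^ 2) :=
    HasSum.even_add_odd h1 h2
  have h4 := HasSum.zero_add (f := fun n : ℕ => ((Nat.factorial n : ℝ))⁻¹ • hat u ^ n) h3
  have h5 := NormedSpace.exp_series_hasSum_exp' (𝕂 := ℝ) (hat u)
  have he := h5.unique h4
  refine he.trans ?_
  simp [add_assoc]

lemma trace_hat (u : EuclideanSpace ℝ (Fin 3)) : (hat u).trace = 0 := by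
  simp [hat, Matrix.trace, Fin.sum_univ_three]

lemma trace_hat_sq (u : EuclideanSpace ℝ (Fin 3)) :
    ((hat u)^2).trace = -(2*‖u‖^2) := by
  have hn := norm_sq_eq u
  rw [pow_two]
  simp [hat, Matrix.trace, Matrix.diag, Matrix.mul_apply, Fin.sum_univ_three, hn]
  ring

lemma transpose_hat (u : EuclideanSpace ℝ (Fin 3)) : (hat u)ᵀ = -hat u := by
  ext i j; fin_cases i <;> fin_cases j <;> simp [hat]

lemma trace_exp_hat (u : EuclideanSpace ℝ (Fin 3)) :
    (NormedSpace.exp (hat u)).trace = 1 + 2 * Real.cos ‖u‖ := by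
  by_cases h0 : ‖u‖ = 0
  · have hu : u = 0 := norm_eq_zero.mp h0
    have : hat u = 0 := by
      subst hu
      ext i j
      fin_cases i <;> fin_cases j <;>
        simp [hat, Matrix.vecHead, Matrix.vecTail]
    rw [this, NormedSpace.exp_zero, h0]
    norm_num [Matrix.trace_one]
  · rw [rodrigues u h0]
    rw [Matrix.trace_add, Matrix.trace_add, Matrix.trace_smul, Matrix.trace_smul,
      trace_hat, trace_hat_sq, Matrix.trace_one]
    field_simp
    simp only [Fintype.card_fin, smul_eq_mul]
    field_simp
    ring

/-- The exponential map of `SO(3)` is injective on the open ball of radius `π` in `ℝ³`. -/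
theorem so3_exp_injOn_ball (u v : EuclideanSpace ℝ (Fin 3))
    (hu : ‖u‖ < Real.pi) (hv : ‖v‖ < Real.pi)
    (h : NormedSpace.exp (hat u) = NormedSpace.exp (hat v)) : u = v := by
  have hcos : Real.cos ‖u‖ = Real.cos ‖v‖ := by
    have := congrArg Matrix.trace h
    rw [trace_exp_hat, trace_exp_hat] at this
    linarith
  have hnorm : ‖u‖ = ‖v‖ :=
    Real.injOn_cos ⟨norm_nonneg u, hu.le⟩ ⟨norm_nonneg v, hv.le⟩ hcos
  by_cases h0 : ‖u‖ = 0
  · have h0' : ‖v‖ = 0 := hnorm ▸ h0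
    rw [norm_eq_zero.mp h0, norm_eq_zero.mp h0']
  · have h0' : ‖v‖ ≠ 0 := hnorm ▸ h0
    set a : ℝ := Real.sin ‖u‖ / ‖u‖ with ha_def
    have e1 : NormedSpace.exp (hat u) - (NormedSpace.exp (hat u))ᵀ = (2*a) • hat u := by
      rw [rodrigues u h0]
      rw [Matrix.transpose_add, Matrix.transpose_add, Matrix.transpose_smul,
        Matrix.transpose_smul, Matrix.transpose_one, Matrix.transpose_pow, transpose_hat]
      rw [neg_sq]
      rw [smul_neg]
      module
    have e2 : NormedSpace.exp (hat v) - (NormedSpace.exp (hat v))ᵀ = (2*a) • hat v := by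
      rw [rodrigues v h0']
      rw [Matrix.transpose_add, Matrix.transpose_add, Matrix.transpose_smul,
        Matrix.transpose_smul, Matrix.transpose_one, Matrix.transpose_pow, transpose_hat]
      rw [neg_sq]
      rw [smul_neg]
      rw [ha_def, hnorm]
      module
    have key : (2*a) • hat u = (2*a) • hat v := by rw [← e1, ← e2, h]
    have hθpos : 0 < ‖u‖ := lt_of_le_of_ne (norm_nonneg u) (Ne.symm h0)
    have hsin : 0 < Real.sin ‖u‖ := Real.sin_pos_of_pos_of_lt_pi hθpos hu
    have ha : (2*a) ≠ 0 := by positivity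
    have hhat : hat u = hat v := smul_right_injective _ ha key
    have c01 := congrFun (congrFun hhat 2) 1
    have c02 := congrFun (congrFun hhat 0) 2
    have c03 := congrFun (congrFun hhat 1) 0
    simp [hat] at c01 c02 c03
    ext i
    fin_cases i <;> assumption
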